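/- Let n be even with n ≥ 6 and let ω ∈ F_{2^n} be a primitive third root of unity. Define f(x) = x^{-1} + δ_S(x) with S = {ω, ω^2} ⊆ F_{2^n} (convention 0^{-1} = 0). Then f is a bijection of F_{2^n}, and for every a ∈ F_{2^n} with a ≠ 0 and every b ∈ F_{2^n}, the equation f(x + a) + f(x) = b has at most 4 solutions x in F_{2^n}, provided n/2 is odd. -/

import Mathlib

open scoped Classical

lemma gcd_lem {n : ℕ} (hn6 : 6 ≤ n) (hne : Even n) (hodd : Odd (n / 2)) :
    Nat.gcd 15 (2 ^ n - 1) = 3 := by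
  obtain ⟨m, hm⟩ := hne
  obtain ⟨k, hk⟩ := hodd
  have hn : n = 4 * k + 2 := by omega
  have h16 : (16 : ℕ) ^ k % 15 = 1 := by
    have : (16 : ℕ) ^ k ≡ 1 ^ k [MOD 15] := Nat.ModEq.pow k (by decide)
    simpa [Nat.ModEq] using this
  have h2n : 2 ^ n = 16 ^ k * 4 := by
    rw [hn, pow_add, pow_mul]
    norm_num
  set t := (16:ℕ)^k / 15 with ht
  have h16' : (16:ℕ)^k = 15 * t + 1 := by
    rw [ht]; omega
  have hx : 2 ^ n - 1 = 15 * (4 * t) + 3 := by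
    rw [h2n, h16']; ring_nf; omega
  rw [Nat.gcd_rec, hx]
  have : (15 * (4 * t) + 3) % 15 = 3 := by omega
  rw [this]
  decide

lemma quad_ncard {F : Type*} [Field F] [Fintype F] (a d : F) :
    ({x : F | x * (x + a) = d}).ncard ≤ 2 := by
  by_cases h : ({x : F | x * (x + a) = d}).Nonempty
  · obtain ⟨x₀, hx₀⟩ := h
    have hsub : {x : F | x * (x + a) = d} ⊆ {x₀, -(x₀ + a)} := by
      intro x hx
      simp only [Set.mem_setOf_eq] at hx hx₀
      have : (x - x₀) * (x + x₀ + a) = 0 := by linear_combination hx - hx₀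
      simp only [Set.mem_insert_iff, Set.mem_singleton_iff]
      rcases mul_eq_zero.mp this with h' | h'
      · exact Or.inl (sub_eq_zero.mp h')
      · exact Or.inr (by linear_combination h')
    calc ({x : F | x * (x + a) = d}).ncard ≤ ({x₀, -(x₀+a)} : Set F).ncard :=
          Set.ncard_le_ncard hsub (Set.toFinite _)
      _ ≤ ({-(x₀+a)} : Set F).ncard + 1 := Set.ncard_insert_le _ _
      _ ≤ 2 := by simp
  · rw [Set.not_nonempty_iff_eq_empty.mp h]; simp

set_option maxHeartbeats 2000000 in
theorem stmt7 {F : Type*} [Field F] [Fintype F] {n : ℕ}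
    (hcard : Fintype.card F = 2 ^ n) (hn6 : 6 ≤ n) (hne : Even n)
    (hodd : Odd (n / 2)) (ω : F) (hω : ω ^ 2 + ω + 1 = 0)
    (f : F → F)
    (hf : ∀ x, f x = x⁻¹ + (if x ∈ ({ω, ω ^ 2} : Set F) then (1 : F) else 0)) :
    Function.Bijective f ∧
      ∀ a : F, a ≠ 0 → ∀ b : F,
        Set.ncard {x : F | f (x + a) + f x = b} ≤ 4 := by
  -- characteristic 2
  have hq0 : ((Fintype.card F : ℕ) : F) = 0 := FiniteField.cast_card_eq_zero F
  have h2 : (2 : F) = 0 := by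
    rw [hcard] at hq0
    push_cast at hq0
    exact pow_eq_zero_iff (n := n) (by omega) |>.mp hq0
  have htwo : ∀ x : F, x + x = 0 := by
    intro x
    have := mul_eq_zero_of_left h2 x
    linear_combination this
  -- facts about ω
  have hω0 : ω ≠ 0 := by
    intro h; rw [h] at hω; simp at hω
  have hω2 : ω ^ 2 = ω + 1 := by linear_combination hω + (-ω - 1) * h2
  have hω3 : ω ^ 3 = 1 := by linear_combination (ω - 1) * hω
  have hωinv : ω⁻¹ = ω ^ 2 := inv_eq_of_mul_eq_one_right (by linear_combination hω3)
  have hω20 : ω ^ 2 ≠ 0 := pow_ne_zero 2 hω0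
  have hω2inv : (ω ^ 2)⁻¹ = ω := inv_eq_of_mul_eq_one_right (by linear_combination hω3)
  have hωne : ω ≠ ω ^ 2 := by
    intro h
    exact one_ne_zero (by linear_combination h - hω2 + (ω ^ 2 - ω) * h2 : (1 : F) = 0)
  set S : Set F := {ω, ω ^ 2} with hSdef
  have h0S : (0 : F) ∉ S := by
    simp only [hSdef, Set.mem_insert_iff, Set.mem_singleton_iff]
    push_neg
    exact ⟨fun h => hω0 h.symm, fun h => hω20 h.symm⟩
  -- the key quartic lemma
  have hkey : ∀ z : F, z ^ 4 + z ≠ 1 := by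
    intro z hz
    have hz0 : z ≠ 0 := by rintro rfl; norm_num at hz
    have e1 : z ^ 4 = z + 1 := by linear_combination hz + (-z) * h2
    have h16 : z ^ 16 = z := by
      have e2 : (z + 1) ^ 4 = z ^ 4 + 1 := by
        linear_combination (2 * z ^ 3 + 3 * z ^ 2 + 2 * z) * h2
      calc z ^ 16 = (z ^ 4) ^ 4 := by ring
        _ = (z + 1) ^ 4 := by rw [e1]
        _ = z ^ 4 + 1 := e2
        _ = z := by rw [e1]; linear_combination h2
    have h15 : z ^ 15 = 1 := by
      have hmul : z * z ^ 15 = z * 1 := by rw [mul_one]; linear_combination h16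
      exact mul_left_cancel₀ hz0 hmul
    have h3 : z ^ 3 = 1 := by
      have d1 : orderOf z ∣ 15 := orderOf_dvd_of_pow_eq_one h15
      have d2 : orderOf z ∣ 2 ^ n - 1 := by
        apply orderOf_dvd_of_pow_eq_one
        rw [← hcard]
        exact FiniteField.pow_card_sub_one_eq_one z hz0
      have hdvd := Nat.dvd_gcd d1 d2
      rw [gcd_lem hn6 hne hodd] at hdvd
      exact orderOf_dvd_iff_pow_eq_one.mp hdvd
    have h4 : z ^ 4 = z := by
      calc z ^ 4 = z ^ 3 * z := by ring
        _ = z := by rw [h3, one_mul]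
    rw [h4, htwo z] at hz
    exact zero_ne_one hz
  have key1 : ∀ z : F, z ^ 2 + z + ω ≠ 0 := by
    intro z h
    apply hkey z
    have e : z ^ 2 = z + ω := by linear_combination h + (-z - ω) * h2
    have e2 : z ^ 4 = z + ω + ω ^ 2 := by
      calc z ^ 4 = (z ^ 2) ^ 2 := by ring
        _ = (z + ω) ^ 2 := by rw [e]
        _ = z ^ 2 + ω ^ 2 := by linear_combination (z * ω) * h2
        _ = z + ω + ω ^ 2 := by rw [e]
    linear_combination e2 + hω2 + (z + ω) * h2
  have key2 : ∀ z : F, z ^ 2 + z + ω ^ 2 ≠ 0 := by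
    intro z h
    apply hkey z
    have e : z ^ 2 = z + ω ^ 2 := by linear_combination h + (-z - ω ^ 2) * h2
    have e2 : z ^ 4 = z + ω ^ 2 + ω := by
      calc z ^ 4 = (z ^ 2) ^ 2 := by ring
        _ = (z + ω ^ 2) ^ 2 := by rw [e]
        _ = z ^ 2 + ω ^ 4 := by linear_combination (z * ω ^ 2) * h2
        _ = z + ω ^ 2 + ω ^ 4 := by rw [e]
        _ = z + ω ^ 2 + ω := by rw [show (ω:F) ^ 4 = ω ^ 3 * ω by ring, hω3, one_mul]
    linear_combination e2 + hω2 + (z + ω) * h2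
  have keyh1 : ∀ u v : F, u ^ 2 + u * v + v ^ 2 * ω = 0 → v = 0 := by
    intro u v h
    by_contra hv
    apply key1 (u / v)
    field_simp
    linear_combination h
  have keyh2 : ∀ u v : F, u ^ 2 + u * v + v ^ 2 * ω ^ 2 = 0 → v = 0 := by
    intro u v h
    by_contra hv
    apply key2 (u / v)
    field_simp
    linear_combination h
  -- values of f and bijectivity
  have hfω : f ω = ω := by
    rw [hf, if_pos (by simp [hSdef]), hωinv]
    linear_combination hω2 + h2
  have hfω2 : f (ω ^ 2) = ω ^ 2 := by
    rw [hf, if_pos (by simp [hSdef]), hω2inv]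
    linear_combination -hω2
  have hinvol : Function.Involutive f := by
    intro x
    by_cases hx : x ∈ S
    · simp only [hSdef, Set.mem_insert_iff, Set.mem_singleton_iff] at hx
      rcases hx with rfl | rfl
      · rw [hfω, hfω]
      · rw [hfω2, hfω2]
    · have h1 : f x = x⁻¹ := by rw [hf, if_neg hx, add_zero]
      have hinS : x⁻¹ ∉ S := by
        simp only [hSdef, Set.mem_insert_iff, Set.mem_singleton_iff] at hx ⊢
        push_neg at hx ⊢
        constructor
        · intro h
          exact hx.2 (by rw [inv_eq_iff_eq_inv.mp h, hωinv])
        · intro h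
          exact hx.1 (by rw [inv_eq_iff_eq_inv.mp h, hω2inv])
      rw [h1, hf, if_neg hinS, add_zero, inv_inv]
  refine ⟨hinvol.bijective, ?_⟩
  intro a ha b
  -- generic clearing of denominators
  have mulout : ∀ x : F, x ≠ 0 → x + a ≠ 0 → ∀ c : F, x⁻¹ + (x + a)⁻¹ = c →
      c * (x * (x + a)) = a := by
    intro x hx0 hxa c h
    field_simp at h
    linear_combination -h + x * h2
  have invmul : ∀ t : F, a⁻¹ * t = a → t = a * a := by
    intro t h
    field_simp at h
    linear_combination h
  -- fiber bounds for the inverse-difference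
  have fib2 : ∀ c : F, c ≠ a⁻¹ → ({x : F | x⁻¹ + (x + a)⁻¹ = c}).ncard ≤ 2 := by
    intro c hca
    by_cases hc0 : c = 0
    · subst hc0
      have hempty : {x : F | x⁻¹ + (x + a)⁻¹ = 0} = ∅ := by
        ext x
        simp only [Set.mem_setOf_eq, Set.mem_empty_iff_false, iff_false]
        intro h
        have hinv : x⁻¹ = (x + a)⁻¹ := by linear_combination h - (x + a)⁻¹ * h2
        have hxx := inv_injective hinv
        exact ha (by linear_combination -hxx)
      rw [hempty]; simp
    · refine le_trans (Set.ncard_le_ncard ?_ (Set.toFinite _)) (quad_ncard a (a / c))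
      intro x hx
      simp only [Set.mem_setOf_eq] at hx ⊢
      have hx0 : x ≠ 0 := by
        rintro rfl
        simp only [inv_zero, zero_add] at hx
        exact hca hx.symm
      have hxa : x + a ≠ 0 := by
        intro h
        have hxe : x = a := by linear_combination h - a * h2
        rw [hxe, htwo a] at hx
        simp only [inv_zero, add_zero] at hx
        exact hca hx.symm
      have h1 := mulout x hx0 hxa c hx
      rw [eq_div_iff hc0]
      linear_combination h1
  have fibinv : ({x : F | x⁻¹ + (x + a)⁻¹ = a⁻¹}).ncard ≤ 4 := by
    have hsub : {x : F | x⁻¹ + (x + a)⁻¹ = a⁻¹} ⊆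
        insert 0 (insert a {x : F | x * (x + a) = a * a}) := by
      intro x hx
      simp only [Set.mem_setOf_eq, Set.mem_insert_iff] at hx ⊢
      by_cases hx0 : x = 0
      · exact Or.inl hx0
      by_cases hxa : x = a
      · exact Or.inr (Or.inl hxa)
      have hxa0 : x + a ≠ 0 := by
        intro h
        exact hxa (by linear_combination h - a * h2)
      have h1 := mulout x hx0 hxa0 a⁻¹ hx
      exact Or.inr (Or.inr (invmul _ h1))
    have q := quad_ncard a (a * a)
    have i1 := Set.ncard_insert_le a {x : F | x * (x + a) = a * a}
    have i2 := Set.ncard_insert_le (0 : F) (insert a {x : F | x * (x + a) = a * a})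
    have hle := Set.ncard_le_ncard hsub (Set.toFinite _)
    omega
  -- splitting a solution according to membership in S
  have split : ∀ x : F, f (x + a) + f x = b →
      (x⁻¹ + (x + a)⁻¹ = b ∧ ((x ∈ S) ↔ (x + a ∈ S))) ∨
      (x⁻¹ + (x + a)⁻¹ = b + 1 ∧ (x ∈ S ∨ x + a ∈ S)) := by
    intro x hx
    rw [hf (x + a), hf x] at hx
    by_cases h1' : x + a ∈ S <;> by_cases h2' : x ∈ S <;>
      simp only [← hSdef, h1', h2', if_true, if_false] at hx
    · exact Or.inl ⟨by linear_combination hx - h2, iff_of_true h2' h1'⟩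
    · exact Or.inr ⟨by linear_combination hx - h2, Or.inr h1'⟩
    · exact Or.inr ⟨by linear_combination hx - h2, Or.inl h2'⟩
    · exact Or.inl ⟨by linear_combination hx, iff_of_false h2' h1'⟩
  by_cases hb1 : b = a⁻¹
  · by_cases haS : a ∈ S
    · -- b = a⁻¹ and a ∈ {ω, ω²}
      have hsub : {x : F | f (x + a) + f x = b} ⊆
          {x : F | x * (x + a) = a * a} ∪ {x : F | x⁻¹ + (x + a)⁻¹ = b + 1} := by
        intro x hx
        rcases split x hx with ⟨hg, hiff⟩ | ⟨hg, _⟩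
        · left
          simp only [Set.mem_setOf_eq]
          have hx0 : x ≠ 0 := by
            rintro rfl
            exact h0S (hiff.mpr (by rw [zero_add]; exact haS))
          have hxa : x + a ≠ 0 := by
            intro h
            have hxe : x = a := by linear_combination h - a * h2
            rw [hxe] at hiff
            have : a + a ∈ S := hiff.mp haS
            rw [htwo a] at this
            exact h0S this
          rw [hb1] at hg
          exact invmul _ (mulout x hx0 hxa a⁻¹ hg)
        · right
          exact hg
      have c1 := quad_ncard a (a * a)
      have c2 : ({x : F | x⁻¹ + (x + a)⁻¹ = b + 1}).ncard ≤ 2 := by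
        apply fib2
        rw [hb1]
        intro h
        exact one_ne_zero (by linear_combination h : (1 : F) = 0)
      have hle := Set.ncard_le_ncard hsub (Set.toFinite _)
      have hu := Set.ncard_union_le {x : F | x * (x + a) = a * a}
        {x : F | x⁻¹ + (x + a)⁻¹ = b + 1}
      omega
    · -- b = a⁻¹ and a ∉ {ω, ω²}
      have haω : a ≠ ω ∧ a ≠ ω ^ 2 := by
        simp only [hSdef, Set.mem_insert_iff, Set.mem_singleton_iff] at haS
        push_neg at haS
        exact haS
      have hωa0 : ω + a ≠ 0 := by
        intro h
        exact haω.1 (by linear_combination h - ω * h2)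
      have hω2a0 : ω ^ 2 + a ≠ 0 := by
        intro h
        exact haω.2 (by linear_combination h - ω ^ 2 * h2)
      have killer1 : ∀ x : F, x⁻¹ + (x + a)⁻¹ = a⁻¹ + 1 → x * (x + a) = ω * (ω + a) →
          False := by
        intro x hEq hProd
        have hωprod : ω * (ω + a) ≠ 0 := mul_ne_zero hω0 hωa0
        have hx0 : x ≠ 0 := by
          rintro rfl
          rw [zero_mul] at hProd
          exact hωprod hProd.symm
        have hxa : x + a ≠ 0 := by
          intro h
          rw [h, mul_zero] at hProd
          exact hωprod hProd.symm
        have h1 := mulout x hx0 hxa _ hEq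
        rw [hProd] at h1
        have h3 : (1 + a) * (ω * (ω + a)) = a * a := by
          have h4 : a * ((a⁻¹ + 1) * (ω * (ω + a))) = a * a := by rw [h1]
          field_simp at h4
          linear_combination h4
        have hP : a ^ 2 + a * ω + 1 = 0 := by
          linear_combination ω * h3 + (1 - ω - a * ω - a ^ 2) * hω +
            (a * ω + a ^ 2 + a ^ 2 * ω) * h2
        have hv := keyh1 1 (a * ω) (by linear_combination hP + a ^ 2 * hω3)
        exact mul_ne_zero ha hω0 hv
      have killer2 : ∀ x : F, x⁻¹ + (x + a)⁻¹ = a⁻¹ + 1 →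
          x * (x + a) = ω ^ 2 * (ω ^ 2 + a) → False := by
        intro x hEq hProd
        have hωprod : ω ^ 2 * (ω ^ 2 + a) ≠ 0 := mul_ne_zero hω20 hω2a0
        have hx0 : x ≠ 0 := by
          rintro rfl
          rw [zero_mul] at hProd
          exact hωprod hProd.symm
        have hxa : x + a ≠ 0 := by
          intro h
          rw [h, mul_zero] at hProd
          exact hωprod hProd.symm
        have h1 := mulout x hx0 hxa _ hEq
        rw [hProd] at h1
        have h3 : (1 + a) * (ω ^ 2 * (ω ^ 2 + a)) = a * a := by
          have h4 : a * ((a⁻¹ + 1) * (ω ^ 2 * (ω ^ 2 + a))) = a * a := by rw [h1]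
          field_simp at h4
          linear_combination h4
        have hP : a ^ 2 + a * ω ^ 2 + 1 = 0 := by
          linear_combination ω ^ 2 * h3 +
            (1 - ω + ω ^ 3 - ω ^ 4 + 2 * a - a * ω ^ 2 + a * ω ^ 3 - a * ω ^ 4 + a ^ 2 +
              a ^ 2 * ω - a ^ 2 * ω ^ 2) * hω + (-a - a * ω - a ^ 2 * ω) * h2
        have hv := keyh2 1 (a * ω ^ 2)
          (by linear_combination hP + a ^ 2 * (ω ^ 3 + 1) * hω3)
        exact mul_ne_zero ha hω20 hv
      have hsub : {x : F | f (x + a) + f x = b} ⊆ {x : F | x⁻¹ + (x + a)⁻¹ = a⁻¹} := by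
        intro x hx
        rcases split x hx with ⟨hg, _⟩ | ⟨hg, hor⟩
        · rw [hb1] at hg
          exact hg
        · exfalso
          rw [hb1] at hg
          rcases hor with hxS | hxaS
          · simp only [hSdef, Set.mem_insert_iff, Set.mem_singleton_iff] at hxS
            rcases hxS with h | h
            · exact killer1 x hg (by rw [h])
            · exact killer2 x hg (by rw [h])
          · simp only [hSdef, Set.mem_insert_iff, Set.mem_singleton_iff] at hxaS
            rcases hxaS with h | h
            · have hxe : x = ω + a := by linear_combination h - a * h2
              exact killer1 x hg (by rw [h, hxe]; ring)
            · have hxe : x = ω ^ 2 + a := by linear_combination h - a * h2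
              exact killer2 x hg (by rw [h, hxe]; ring)
      have hle := Set.ncard_le_ncard hsub (Set.toFinite _)
      omega
  · by_cases hb2 : b = a⁻¹ + 1
    · -- case b = a⁻¹ + 1
      by_cases haω : a = ω
      · subst haω
        have hb : b = a := by
          rw [hb2, hωinv]
          linear_combination hω2 + h2
        have hsub : {x : F | f (x + a) + f x = b} ⊆ {x : F | x⁻¹ + (x + a)⁻¹ = a⁻¹} := by
          intro x hx
          rcases split x hx with ⟨hg, _⟩ | ⟨hg, _⟩
          · exfalso
            rw [hb] at hg
            have hx0 : x ≠ 0 := by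
              rintro rfl
              simp only [inv_zero, zero_add] at hg
              rw [hωinv] at hg
              exact hωne hg.symm
            have hxa : x + a ≠ 0 := by
              intro h
              have hxe : x = a := by linear_combination h - a * h2
              rw [h, inv_zero, add_zero, hxe, hωinv] at hg
              exact hωne hg.symm
            have h1 := mulout x hx0 hxa _ hg
            have hq : x * (x + a) = 1 := mul_left_cancel₀ hω0 (by rw [h1, mul_one])
            exact hω0 (keyh1 x a (by linear_combination hq + hω3 + h2))
          · simp only [Set.mem_setOf_eq]
            rw [hb2] at hg
            linear_combination hg + h2
        have hle := Set.ncard_le_ncard hsub (Set.toFinite _)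
        omega
      · by_cases haω2 : a = ω ^ 2
        · subst haω2
          have hb : b = ω ^ 2 := by
            rw [hb2, hω2inv]
            linear_combination -hω2
          have hsub : {x : F | f (x + ω ^ 2) + f x = b} ⊆
              {x : F | x⁻¹ + (x + ω ^ 2)⁻¹ = (ω ^ 2)⁻¹} := by
            intro x hx
            rcases split x hx with ⟨hg, _⟩ | ⟨hg, _⟩
            · exfalso
              rw [hb] at hg
              have hx0 : x ≠ 0 := by
                rintro rfl
                simp only [inv_zero, zero_add] at hg
                rw [hω2inv] at hg
                exact hωne hg
              have hxa : x + ω ^ 2 ≠ 0 := by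
                intro h
                have hxe : x = ω ^ 2 := by linear_combination h - ω ^ 2 * h2
                rw [h, inv_zero, add_zero, hxe, hω2inv] at hg
                exact hωne hg
              have h1 := mulout x hx0 hxa _ hg
              have hq : x * (x + ω ^ 2) = 1 :=
                mul_left_cancel₀ hω20 (by rw [h1, mul_one])
              exact hω20 (keyh2 x (ω ^ 2)
                (by linear_combination hq + (ω ^ 3 + 1) * hω3 + h2))
            · simp only [Set.mem_setOf_eq]
              rw [hb2] at hg
              linear_combination hg + h2
          have hle := Set.ncard_le_ncard hsub (Set.toFinite _)
          omega
        · -- b = a⁻¹ + 1, a ∉ {ω, ω²}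
          have hsub : {x : F | f (x + a) + f x = b} ⊆
              {x : F | x⁻¹ + (x + a)⁻¹ = b} ∪ {x : F | x * (x + a) = a * a} := by
            intro x hx
            rcases split x hx with ⟨hg, _⟩ | ⟨hg, hor⟩
            · exact Or.inl hg
            · right
              simp only [Set.mem_setOf_eq]
              have hx0 : x ≠ 0 := by
                rintro rfl
                rcases hor with h | h
                · exact h0S h
                · rw [zero_add] at h
                  simp only [hSdef, Set.mem_insert_iff, Set.mem_singleton_iff] at h
                  tauto
              have hxa : x + a ≠ 0 := by
                intro h
                have hxe : x = a := by linear_combination h - a * h2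
                rcases hor with h' | h'
                · rw [hxe] at h'
                  simp only [hSdef, Set.mem_insert_iff, Set.mem_singleton_iff] at h'
                  tauto
                · rw [h] at h'
                  exact h0S h'
              have hg' : x⁻¹ + (x + a)⁻¹ = a⁻¹ := by
                rw [hb2] at hg
                linear_combination hg + h2
              exact invmul _ (mulout x hx0 hxa _ hg')
          have c1 : ({x : F | x⁻¹ + (x + a)⁻¹ = b}).ncard ≤ 2 := fib2 b hb1
          have c2 := quad_ncard a (a * a)
          have hle := Set.ncard_le_ncard hsub (Set.toFinite _)
          have hu := Set.ncard_union_le {x : F | x⁻¹ + (x + a)⁻¹ = b}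
            {x : F | x * (x + a) = a * a}
          omega
    · -- generic case
      have hsub : {x : F | f (x + a) + f x = b} ⊆
          {x : F | x⁻¹ + (x + a)⁻¹ = b} ∪ {x : F | x⁻¹ + (x + a)⁻¹ = b + 1} := by
        intro x hx
        rcases split x hx with ⟨hg, _⟩ | ⟨hg, _⟩
        · exact Or.inl hg
        · exact Or.inr hg
      have c1 : ({x : F | x⁻¹ + (x + a)⁻¹ = b}).ncard ≤ 2 := fib2 b hb1
      have c2 : ({x : F | x⁻¹ + (x + a)⁻¹ = b + 1}).ncard ≤ 2 := by
        apply fib2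
        intro h
        exact hb2 (by linear_combination h - h2)
      have hle := Set.ncard_le_ncard hsub (Set.toFinite _)
      have hu := Set.ncard_union_le {x : F | x⁻¹ + (x + a)⁻¹ = b}
        {x : F | x⁻¹ + (x + a)⁻¹ = b + 1}
      omega
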